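/- arXiv:1510.08477 — 3 statements merged into one kernel-verified Lean document; each statement's English description precedes it below -/
import Mathlib

section
/- Let E be a convex polygon with η_E the minimal number of lines covering its boundary, and let k ≥ η_E. If a polynomial p of degree ≤ k vanishes on ∂E and satisfies ∫_E p·q dE = 0 for all polynomials q of degree ≤ k − η_E, then p ≡ 0. -/
open MvPolynomial MeasureTheory


lemma degree_sum_eq (d : Fin 2 →₀ ℕ) : (d.sum fun _ e => e) = d.degree := by
  simp [Finsupp.degree, Finsupp.sum]
  rfl

lemma hc_top_ne_zero {f : MvPolynomial (Fin 2) ℝ} (hf : f ≠ 0) :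
    homogeneousComponent f.totalDegree f ≠ 0 := by
  obtain ⟨d, hd, hdeg⟩ : ∃ d ∈ f.support, f.totalDegree = d.sum fun _ e => e :=
    Finset.exists_mem_eq_sup _ (MvPolynomial.support_nonempty.2 hf) _
  intro h0
  have : coeff d (homogeneousComponent f.totalDegree f) = coeff d f := by
    rw [coeff_homogeneousComponent, if_pos]
    rw [← degree_sum_eq, ← hdeg]
  rw [h0, coeff_zero] at this
  exact (MvPolynomial.mem_support_iff.1 hd) this.symm

lemma hc_top_mul (f g : MvPolynomial (Fin 2) ℝ) :
    homogeneousComponent (f.totalDegree + g.totalDegree) (f * g)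
      = homogeneousComponent f.totalDegree f * homogeneousComponent g.totalDegree g := by
  ext d
  rw [coeff_homogeneousComponent, coeff_mul, coeff_mul]
  split_ifs with hd
  · refine Finset.sum_congr rfl ?_
    rintro ⟨u, v⟩ huv
    rw [Finset.HasAntidiagonal.mem_antidiagonal] at huv
    dsimp only at huv ⊢
    rw [coeff_homogeneousComponent, coeff_homogeneousComponent]
    have hsum : u.degree + v.degree = f.totalDegree + g.totalDegree := by
      rw [← hd, ← huv]
      simp [Finsupp.degree_eq_weight_one, map_add]
    by_cases hcu : coeff u f = 0
    · by_cases hu : u.degree = f.totalDegree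
      · rw [if_pos hu]; simp [hcu]
      · rw [if_neg hu]; simp [hcu]
    by_cases hcv : coeff v g = 0
    · split_ifs <;> simp [hcv]
    have hu : u.degree ≤ f.totalDegree := by
      rw [← degree_sum_eq]; exact le_totalDegree (MvPolynomial.mem_support_iff.2 hcu)
    have hv : v.degree ≤ g.totalDegree := by
      rw [← degree_sum_eq]; exact le_totalDegree (MvPolynomial.mem_support_iff.2 hcv)
    rw [if_pos (by omega), if_pos (by omega)]
  · refine (Finset.sum_eq_zero ?_).symm
    rintro ⟨u, v⟩ huv
    rw [Finset.HasAntidiagonal.mem_antidiagonal] at huv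
    dsimp only at huv ⊢
    have hsum : u.degree + v.degree = d.degree := by
      rw [← huv]; simp [Finsupp.degree_eq_weight_one, map_add]
    rw [coeff_homogeneousComponent, coeff_homogeneousComponent]
    split_ifs <;> first | omega | ring

lemma tdeg_mul_eq {f g : MvPolynomial (Fin 2) ℝ} (hf : f ≠ 0) (hg : g ≠ 0) :
    (f * g).totalDegree = f.totalDegree + g.totalDegree := by
  refine le_antisymm (totalDegree_mul f g) ?_
  by_contra h
  push_neg at h
  have h0 := homogeneousComponent_eq_zero (f.totalDegree + g.totalDegree) (f * g) h
  rw [hc_top_mul] at h0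
  exact mul_ne_zero (hc_top_ne_zero hf) (hc_top_ne_zero hg) h0

noncomputable def lin (a b c : ℝ) : MvPolynomial (Fin 2) ℝ := C a * X 0 + C b * X 1 + C c

lemma eval_lin (a b c : ℝ) (z : Fin 2 → ℝ) :
    eval z (lin a b c) = a * z 0 + b * z 1 + c := by simp [lin]

lemma lin_coeff0 (a b c : ℝ) : coeff (Finsupp.single 0 1) (lin a b c) = a := by
  simp [lin, coeff_C_mul, MvPolynomial.coeff_X', coeff_C, Finsupp.single_eq_single_iff]
  intro h
  exact absurd h.symm (by simp [Finsupp.single_eq_zero])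

lemma lin_coeff1 (a b c : ℝ) : coeff (Finsupp.single 1 1) (lin a b c) = b := by
  simp [lin, coeff_C_mul, MvPolynomial.coeff_X', coeff_C, Finsupp.single_eq_single_iff]
  intro h
  exact absurd h.symm (by simp [Finsupp.single_eq_zero])

lemma lin_coeffC (a b c : ℝ) : coeff 0 (lin a b c) = c := by
  simp [lin, coeff_C_mul, MvPolynomial.coeff_X', coeff_C, Finsupp.single_eq_zero]

lemma lin_ne_zero {a b c : ℝ} (h : (a, b) ≠ ((0:ℝ), (0:ℝ))) : lin a b c ≠ 0 := by
  intro h0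
  have h1 := lin_coeff0 a b c
  have h2 := lin_coeff1 a b c
  rw [h0, coeff_zero] at h1 h2
  exact h (by rw [← h1, ← h2])

lemma lin_tdeg_le (a b c : ℝ) : (lin a b c).totalDegree ≤ 1 := by
  refine le_trans (totalDegree_add _ _) ?_
  simp only [max_le_iff]
  constructor
  · refine le_trans (totalDegree_add _ _) ?_
    simp only [max_le_iff]
    refine ⟨le_trans (totalDegree_mul _ _) ?_, le_trans (totalDegree_mul _ _) ?_⟩ <;>
      simp [totalDegree_C, totalDegree_X]
  · simp [totalDegree_C]

lemma lin_tdeg {a b c : ℝ} (h : (a, b) ≠ ((0:ℝ), (0:ℝ))) : (lin a b c).totalDegree = 1 := by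
  refine le_antisymm (lin_tdeg_le a b c) ?_
  have h' : a ≠ 0 ∨ b ≠ 0 := by
    by_contra hcon; push_neg at hcon; exact h (by simp [hcon.1, hcon.2])
  rcases h' with ha | hb
  · have : Finsupp.single (0 : Fin 2) 1 ∈ (lin a b c).support := by
      rw [MvPolynomial.mem_support_iff, lin_coeff0]; exact ha
    simpa using le_totalDegree this
  · have : Finsupp.single (1 : Fin 2) 1 ∈ (lin a b c).support := by
      rw [MvPolynomial.mem_support_iff, lin_coeff1]; exact hb
    simpa using le_totalDegree this

lemma eq_C_of_tdeg_zero {g : MvPolynomial (Fin 2) ℝ} (hg : g.totalDegree = 0) :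
    g = C (coeff 0 g) := by
  rw [totalDegree_eq_zero_iff] at hg
  ext d
  rw [coeff_C]
  split_ifs with hd
  · rw [← hd]
  · by_contra hc
    have := hg d (MvPolynomial.mem_support_iff.2 hc)
    exact hd (Finsupp.ext fun x => by simp [this x])

lemma lin_irred {a b c : ℝ} (h : (a, b) ≠ ((0:ℝ), (0:ℝ))) : Irreducible (lin a b c) := by
  constructor
  · intro hu
    obtain ⟨v, hv⟩ := hu.exists_right_inv
    have h1 : (lin a b c).totalDegree + v.totalDegree = 0 := by
      rw [← tdeg_mul_eq (lin_ne_zero h) (fun h0 => by simp [h0] at hv), hv, totalDegree_one]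
    rw [lin_tdeg h] at h1
    omega
  · intro g f hgf
    have hg0 : g ≠ 0 := fun h0 => lin_ne_zero h (by rw [hgf, h0, zero_mul])
    have hf0 : f ≠ 0 := fun h0 => lin_ne_zero h (by rw [hgf, h0, mul_zero])
    have h1 : g.totalDegree + f.totalDegree = 1 := by
      rw [← tdeg_mul_eq hg0 hf0, ← hgf, lin_tdeg h]
    rcases Nat.eq_zero_or_pos g.totalDegree with hg | hg
    · left
      rw [eq_C_of_tdeg_zero hg]
      have : coeff 0 g ≠ 0 := fun h0 => hg0 (by rw [eq_C_of_tdeg_zero hg, h0, map_zero])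
      exact (IsUnit.map MvPolynomial.C (Ne.isUnit this))
    · right
      have hf : f.totalDegree = 0 := by omega
      rw [eq_C_of_tdeg_zero hf]
      have : coeff 0 f ≠ 0 := fun h0 => hf0 (by rw [eq_C_of_tdeg_zero hf, h0, map_zero])
      exact (IsUnit.map MvPolynomial.C (Ne.isUnit this))



lemma lin_dvd_sub_phi {a b c : ℝ} (hb : b ≠ 0) (f : MvPolynomial (Fin 2) ℝ) :
    lin a b c ∣ f - aeval ![X 0, C (-(c/b)) + C (-(a/b)) * X 0] f := by
  set u : Fin 2 → MvPolynomial (Fin 2) ℝ := ![X 0, C (-(c/b)) + C (-(a/b)) * X 0] with hu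
  have hX : ∀ i : Fin 2, lin a b c ∣ X i - u i := by
    intro i
    fin_cases i
    · show lin a b c ∣ X 0 - u 0
      simp [hu]
    · show lin a b c ∣ X 1 - u 1
      refine ⟨C b⁻¹, ?_⟩
      have hC : (C b : MvPolynomial (Fin 2) ℝ) * C b⁻¹ = 1 := by
        rw [← C_mul, mul_inv_cancel₀ hb, C_1]
      have h1 : (C (-(a/b)) : MvPolynomial (Fin 2) ℝ) = -(C a * C b⁻¹) := by
        rw [← C_mul, ← C_neg, div_eq_mul_inv]
      have h2 : (C (-(c/b)) : MvPolynomial (Fin 2) ℝ) = -(C c * C b⁻¹) := by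
        rw [← C_mul, ← C_neg, div_eq_mul_inv]
      simp only [hu, lin, Matrix.cons_val_one, Matrix.head_cons, Matrix.cons_val_zero, h1, h2]
      linear_combination (-(X 1 : MvPolynomial (Fin 2) ℝ)) * hC
  induction f using MvPolynomial.induction_on with
  | C r => simp
  | add p q hp hq =>
      have : p + q - aeval u (p + q) = (p - aeval u p) + (q - aeval u q) := by
        rw [map_add]; ring
      rw [this]; exact dvd_add hp hq
  | mul_X p i hp =>
      have : p * X i - aeval u (p * X i) =
          (p - aeval u p) * X i + aeval u p * (X i - u i) := by
        rw [map_mul, aeval_X]; ring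
      rw [this]
      exact dvd_add (Dvd.dvd.mul_right hp _) (Dvd.dvd.mul_left (hX i) _)

lemma lin_dvd_seg_b {a b c : ℝ} (hb : b ≠ 0) {f : MvPolynomial (Fin 2) ℝ}
    {u v : Fin 2 → ℝ} (huv : u 0 ≠ v 0)
    (hline : ∀ z ∈ segment ℝ u v, a * z 0 + b * z 1 + c = 0)
    (hvanish : ∀ z ∈ segment ℝ u v, eval z f = 0) : lin a b c ∣ f := by
  set χ : MvPolynomial (Fin 2) ℝ →ₐ[ℝ] Polynomial ℝ :=
    aeval ![Polynomial.X, Polynomial.C (-(c/b)) + Polynomial.C (-(a/b)) * Polynomial.X] with hχ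
  have key : ∀ x : ℝ, Polynomial.eval x (χ f) = eval ![x, -(a*x+c)/b] f := by
    intro x
    have hcomp : (Polynomial.aeval x).comp χ = MvPolynomial.aeval ![x, -(a*x+c)/b] := by
      apply MvPolynomial.algHom_ext
      intro i
      fin_cases i
      · simp [hχ]
      · simp [hχ]
        field_simp
    calc Polynomial.eval x (χ f) = Polynomial.aeval x (χ f) := by
            rw [Polynomial.coe_aeval_eq_eval]
      _ = ((Polynomial.aeval x).comp χ) f := rfl
      _ = MvPolynomial.aeval ![x, -(a*x+c)/b] f := by rw [hcomp]
      _ = eval ![x, -(a*x+c)/b] f := by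
            rw [← MvPolynomial.coe_aeval_eq_eval]; rfl
  have hroots : {x : ℝ | (χ f).IsRoot x}.Infinite := by
    have hsub : segment ℝ (u 0) (v 0) ⊆ {x : ℝ | (χ f).IsRoot x} := by
      rintro x ⟨t, s, ht, hs, hts, rfl⟩
      set z : Fin 2 → ℝ := t • u + s • v with hz
      have hzmem : z ∈ segment ℝ u v := ⟨t, s, ht, hs, hts, rfl⟩
      have hz0 : z 0 = t * u 0 + s * v 0 := by simp [hz]
      have hz1 : z 1 = -(a * z 0 + c)/b := by
        have := hline z hzmem
        field_simp
        linarith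
      have hpt : ![t * u 0 + s * v 0, -(a*(t * u 0 + s * v 0)+c)/b] = z := by
        funext i
        fin_cases i
        · show t * u 0 + s * v 0 = z 0
          rw [hz0]
        · show -(a*(t * u 0 + s * v 0)+c)/b = z 1
          rw [hz1, hz0]
      show (χ f).IsRoot (t • u 0 + s • v 0)
      unfold Polynomial.IsRoot
      have : t • u 0 + s • v 0 = t * u 0 + s * v 0 := rfl
      rw [this, key, hpt]
      exact hvanish z hzmem
    refine Set.Infinite.mono hsub ?_
    rw [segment_eq_uIcc, Set.uIcc]
    exact Set.Icc_infinite (inf_lt_sup.mpr huv)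
  have hχf : χ f = 0 := Polynomial.eq_zero_of_infinite_isRoot _ hroots
  have hphi : (aeval ![X 0, C (-(c/b)) + C (-(a/b)) * X 0] f : MvPolynomial (Fin 2) ℝ) = 0 := by
    have hcomp2 : (Polynomial.aeval (X 0 : MvPolynomial (Fin 2) ℝ)).comp χ
        = MvPolynomial.aeval ![X 0, C (-(c/b)) + C (-(a/b)) * X 0] := by
      apply MvPolynomial.algHom_ext
      intro i
      fin_cases i <;> simp [hχ]
    calc (aeval ![X 0, C (-(c/b)) + C (-(a/b)) * X 0] f : MvPolynomial (Fin 2) ℝ)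
        = ((Polynomial.aeval (X 0 : MvPolynomial (Fin 2) ℝ)).comp χ) f := by rw [hcomp2]
      _ = Polynomial.aeval (X 0 : MvPolynomial (Fin 2) ℝ) (χ f) := rfl
      _ = 0 := by rw [hχf, map_zero]
  have hdvd := lin_dvd_sub_phi hb (a := a) (c := c) f
  rwa [hphi, sub_zero] at hdvd

lemma lin_dvd_seg {a b c : ℝ} (h : (a, b) ≠ ((0:ℝ), (0:ℝ))) {f : MvPolynomial (Fin 2) ℝ}
    {u v : Fin 2 → ℝ} (huv : u ≠ v)
    (hline : ∀ z ∈ segment ℝ u v, a * z 0 + b * z 1 + c = 0)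
    (hvanish : ∀ z ∈ segment ℝ u v, eval z f = 0) : lin a b c ∣ f := by
  by_cases hb : b ≠ 0
  · -- need u 0 ≠ v 0
    have hu0 : u 0 ≠ v 0 := by
      intro h00
      apply huv
      have h1 := hline u (left_mem_segment ℝ u v)
      have h2 := hline v (right_mem_segment ℝ u v)
      have h11 : u 1 = v 1 := by
        rw [h00] at h1
        have : b * u 1 = b * v 1 := by linarith
        exact mul_left_cancel₀ hb this
      funext i
      fin_cases i
      · exact h00
      · exact h11
    exact lin_dvd_seg_b hb hu0 hline hvanish
  · push_neg at hb
    subst hb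
    have ha : a ≠ 0 := by
      intro h0; exact h (by rw [h0])
    -- swap coordinates
    set e : Fin 2 ≃ Fin 2 := Equiv.swap 0 1 with he
    set u' : Fin 2 → ℝ := u ∘ e with hu'
    set v' : Fin 2 → ℝ := v ∘ e with hv'
    have hmem : ∀ z ∈ segment ℝ u v, z ∘ e ∈ segment ℝ u' v' := by
      rintro z ⟨t, s, ht, hs, hts, rfl⟩
      exact ⟨t, s, ht, hs, hts, rfl⟩
    have hu0' : u' 0 ≠ v' 0 := by
      intro h00
      apply huv
      have h1 := hline u (left_mem_segment ℝ u v)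
      have h2 := hline v (right_mem_segment ℝ u v)
      have h00' : u 1 = v 1 := by simpa [hu', hv', he] using h00
      have h10 : u 0 = v 0 := by
        have : a * u 0 = a * v 0 := by linarith
        exact mul_left_cancel₀ ha this
      funext i
      fin_cases i
      · exact h10
      · exact h00'
    have hdvd' : lin 0 a c ∣ rename e f := by
      apply lin_dvd_seg_b ha hu0'
      · rintro z' ⟨t, s, ht, hs, hts, rfl⟩
        have hz : (t • u' + s • v') ∘ e = t • u + s • v := by
          funext i
          simp [hu', hv', he, Equiv.swap_apply_def]
          fin_cases i <;> simp
        have := hline (t • u + s • v) ⟨t, s, ht, hs, hts, rfl⟩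
        have e0 : (t • u' + s • v') 0 = (t • u + s • v) 1 := by
          rw [← hz]; simp [he]
        have e1 : (t • u' + s • v') 1 = (t • u + s • v) 0 := by
          rw [← hz]; simp [he]
        rw [e0, e1]
        linarith
      · rintro z' ⟨t, s, ht, hs, hts, rfl⟩
        rw [eval_rename]
        have hz : (t • u' + s • v') ∘ e = t • u + s • v := by
          funext i
          simp [hu', hv', he, Equiv.swap_apply_def]
          fin_cases i <;> simp
        rw [hz]
        exact hvanish _ ⟨t, s, ht, hs, hts, rfl⟩
    have hswap : rename (e : Fin 2 → Fin 2) (lin 0 a c) = lin a 0 c := by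
      simp only [lin, map_add, map_mul, rename_C, rename_X, he]
      simp [Equiv.swap_apply_def]
      try ring
    have hfin := map_dvd (rename (e : Fin 2 → Fin 2)) hdvd'
    rw [hswap, rename_rename] at hfin
    have hid : (⇑e ∘ ⇑e) = id := by
      funext x
      simp [he, Equiv.swap_apply_self]
    rw [hid, rename_id] at hfin
    exact hfin


lemma prod_primes_dvd' {ι : Type*} [DecidableEq ι] {R : Type*} [CommMonoidWithZero R]
    (s : Finset ι) (P : ι → R) :
    ∀ p : R, (∀ i ∈ s, Prime (P i)) → (∀ i ∈ s, ∀ j ∈ s, i ≠ j → ¬ P i ∣ P j) →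
    (∀ i ∈ s, P i ∣ p) → (∏ i ∈ s, P i) ∣ p := by
  induction s using Finset.induction_on with
  | empty => intro p _ _ _; simp
  | @insert j s' hj ih =>
    intro p hprime hnd hdvd
    obtain ⟨m, rfl⟩ := hdvd j (Finset.mem_insert_self j s')
    rw [Finset.prod_insert hj]
    refine mul_dvd_mul_left (P j) ?_
    apply ih m
    · intro i hi; exact hprime i (Finset.mem_insert_of_mem hi)
    · intro i hi j' hj' hij
      exact hnd i (Finset.mem_insert_of_mem hi) j' (Finset.mem_insert_of_mem hj') hij
    · intro i hi
      have hiP : Prime (P i) := hprime i (Finset.mem_insert_of_mem hi)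
      have hij : i ≠ j := fun h => hj (h ▸ hi)
      have := hdvd i (Finset.mem_insert_of_mem hi)
      rcases hiP.dvd_mul.mp this with h | h
      · exact absurd h (hnd i (Finset.mem_insert_of_mem hi) j (Finset.mem_insert_self j s') hij)
      · exact h


lemma point_on_line_param {a b c : ℝ} (hab : a ≠ 0 ∨ b ≠ 0) {u : Fin 2 → ℝ}
    (hu : a * u 0 + b * u 1 + c = 0) {z : Fin 2 → ℝ} (hz : a * z 0 + b * z 1 + c = 0) :
    ∃ r : ℝ, z = r • ![b, -a] +ᵥ u := by
  rcases hab with ha | hb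
  · refine ⟨-(z 1 - u 1)/a, ?_⟩
    funext i
    fin_cases i
    · show z 0 = -(z 1 - u 1)/a * b + u 0
      field_simp
      ring_nf
      nlinarith [hu, hz]
    · show z 1 = -(z 1 - u 1)/a * (-a) + u 1
      field_simp
      ring
  · refine ⟨(z 0 - u 0)/b, ?_⟩
    funext i
    fin_cases i
    · show z 0 = (z 0 - u 0)/b * b + u 0
      field_simp
      ring
    · show z 1 = (z 0 - u 0)/b * (-a) + u 1
      field_simp
      ring_nf
      nlinarith [hu, hz]

lemma collinear_three_on_line {a b c : ℝ} (hab : a ≠ 0 ∨ b ≠ 0) {x u v : Fin 2 → ℝ}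
    (hx : a * x 0 + b * x 1 + c = 0) (hu : a * u 0 + b * u 1 + c = 0)
    (hv : a * v 0 + b * v 1 + c = 0) :
    Collinear ℝ ({x, u, v} : Set (Fin 2 → ℝ)) := by
  rw [collinear_iff_of_mem (Set.mem_insert_of_mem _ (Set.mem_insert _ _))]
  refine ⟨![b, -a], ?_⟩
  rintro p (rfl | rfl | rfl)
  · exact point_on_line_param hab hu hx
  · exact point_on_line_param hab hu hu
  · exact point_on_line_param hab hu hv

lemma interior_off_line {E : Set (Fin 2 → ℝ)} (hconv : Convex ℝ E)
    {a b c : ℝ} (hab : a ≠ 0 ∨ b ≠ 0) {u v : Fin 2 → ℝ} (huv : u ≠ v)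
    (hseg : segment ℝ u v ⊆ frontier E)
    (honline : ∀ z ∈ segment ℝ u v, a * z 0 + b * z 1 + c = 0)
    {x : Fin 2 → ℝ} (hx : x ∈ interior E) : a * x 0 + b * x 1 + c ≠ 0 := by
  intro hx0
  have hufr : u ∈ frontier E := hseg (left_mem_segment ℝ u v)
  have hvfr : v ∈ frontier E := hseg (right_mem_segment ℝ u v)
  have hxnfr : x ∉ frontier E := fun h => h.2 hx
  have hunin : u ∉ interior E := hufr.2
  have hvnin : v ∉ interior E := hvfr.2
  have hucl : u ∈ closure E := hufr.1
  have hvcl : v ∈ closure E := hvfr.1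
  have hcol := collinear_three_on_line hab hx0
    (honline u (left_mem_segment ℝ u v)) (honline v (right_mem_segment ℝ u v))
  have hxu : x ≠ u := fun h => hunin (h ▸ hx)
  have hxv : x ≠ v := fun h => hvnin (h ▸ hx)
  rcases hcol.wbtw_or_wbtw_or_wbtw with hw | hw | hw
  · -- Wbtw x u v : u ∈ segment x v
    have hu_seg : u ∈ segment ℝ x v := hw.mem_segment
    have : u ∈ openSegment ℝ x v :=
      mem_openSegment_of_ne_left_right hxu (fun h => huv h.symm) hu_seg
    exact hunin (hconv.openSegment_interior_closure_subset_interior hx hvcl this)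
  · -- Wbtw u v x : v ∈ segment u x
    have hv_seg : v ∈ segment ℝ u x := hw.mem_segment
    rw [segment_symm] at hv_seg
    have : v ∈ openSegment ℝ x u :=
      mem_openSegment_of_ne_left_right hxv huv hv_seg
    exact hvnin (hconv.openSegment_interior_closure_subset_interior hx hucl this)
  · -- Wbtw v x u : x ∈ segment v u
    have hx_seg : x ∈ segment ℝ v u := hw.mem_segment
    rw [segment_symm] at hx_seg
    exact hxnfr (hseg hx_seg)


lemma vanish_of_integral_zero {E : Set (Fin 2 → ℝ)} (hconv : Convex ℝ E)
    {g : (Fin 2 → ℝ) → ℝ} (hg : Continuous g) (hint : IntegrableOn g E volume)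
    (hnn : ∀ x ∈ interior E, 0 ≤ g x) (hzero : ∫ x in E, g x = 0) :
    ∀ x ∈ interior E, g x = 0 := by
  have hfr : volume (frontier E) = 0 := hconv.addHaar_frontier volume
  have haeq : interior E =ᵐ[volume] E := by
    rw [MeasureTheory.ae_eq_set]
    constructor
    · refine measure_mono_null ?_ hfr
      intro x hx
      exact absurd (interior_subset hx.1) hx.2
    · refine measure_mono_null ?_ hfr
      intro x hx
      exact ⟨subset_closure hx.1, hx.2⟩
  have h1 : ∫ x in interior E, g x = 0 := by
    rw [setIntegral_congr_set haeq]; exact hzero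
  have hint' : IntegrableOn g (interior E) volume := hint.mono_set interior_subset
  have hms : MeasurableSet (interior E) := isOpen_interior.measurableSet
  have hnn' : 0 ≤ᵐ[volume.restrict (interior E)] g :=
    (ae_restrict_iff' hms).2 (Filter.Eventually.of_forall hnn)
  have h2 : g =ᵐ[volume.restrict (interior E)] 0 :=
    (setIntegral_eq_zero_iff_of_nonneg_ae hnn' hint').1 h1
  have h3 : volume ({x | ¬ (x ∈ interior E → g x = 0)}) = 0 := by
    have := (ae_restrict_iff' hms).1 h2
    exact this
  intro x hx
  by_contra hgx
  have hVopen : IsOpen (interior E ∩ g ⁻¹' {(0:ℝ)}ᶜ) :=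
    isOpen_interior.inter (hg.isOpen_preimage _ (isOpen_compl_iff.2 isClosed_singleton))
  have hVx : x ∈ interior E ∩ g ⁻¹' {(0:ℝ)}ᶜ := ⟨hx, by simpa using hgx⟩
  have hpos : 0 < volume (interior E ∩ g ⁻¹' {(0:ℝ)}ᶜ) :=
    hVopen.measure_pos volume ⟨x, hVx⟩
  refine absurd (measure_mono_null ?_ h3) hpos.ne'
  rintro y ⟨hy1, hy2⟩
  intro h
  exact hy2 (by simpa using h hy1)

lemma mvpoly_zero_of_vanish_open {U : Set (Fin 2 → ℝ)} (hU : IsOpen U) (hne : U.Nonempty)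
    {q : MvPolynomial (Fin 2) ℝ} (hvan : ∀ x ∈ U, eval x q = 0) : q = 0 := by
  obtain ⟨x₀, hx₀⟩ := hne
  have key : ∀ y : Fin 2 → ℝ, eval y q = 0 := by
    intro y
    set d : Fin 2 → ℝ := y - x₀ with hd
    set w : Fin 2 → Polynomial ℝ :=
      fun i => Polynomial.C (x₀ i) + Polynomial.C (d i) * Polynomial.X with hw
    set r : Polynomial ℝ := aeval w q with hr
    have keyr : ∀ t : ℝ, Polynomial.eval t r = eval (x₀ + t • d) q := by
      intro t
      have hcomp : (Polynomial.aeval t).comp (aeval w : MvPolynomial (Fin 2) ℝ →ₐ[ℝ] Polynomial ℝ)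
          = MvPolynomial.aeval (x₀ + t • d) := by
        apply MvPolynomial.algHom_ext
        intro i
        simp [hw]
        ring
      calc Polynomial.eval t r = Polynomial.aeval t r := by rw [Polynomial.coe_aeval_eq_eval]
        _ = ((Polynomial.aeval t).comp (aeval w : MvPolynomial (Fin 2) ℝ →ₐ[ℝ] Polynomial ℝ)) q := rfl
        _ = MvPolynomial.aeval (x₀ + t • d) q := by rw [hcomp]
        _ = eval (x₀ + t • d) q := by rw [← MvPolynomial.coe_aeval_eq_eval]; rfl
    obtain ⟨ε, hε, hball⟩ := Metric.isOpen_iff.1 hU x₀ hx₀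
    set δ : ℝ := ε / (‖d‖ + 1) with hδ
    have hdpos : (0:ℝ) < ‖d‖ + 1 := by positivity
    have hδpos : 0 < δ := div_pos hε hdpos
    have hsub : Set.Ioo (-δ) δ ⊆ {t : ℝ | r.IsRoot t} := by
      intro t ht
      have htmem : x₀ + t • d ∈ U := by
        apply hball
        rw [Metric.mem_ball]
        have : dist (x₀ + t • d) x₀ = ‖t • d‖ := by
          rw [dist_eq_norm]; congr 1; abel
        rw [this, norm_smul]
        have h1 : |t| < δ := abs_lt.2 ⟨ht.1, ht.2⟩
        calc ‖t‖ * ‖d‖ ≤ |t| * (‖d‖ + 1) := by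
              rw [Real.norm_eq_abs]
              exact mul_le_mul_of_nonneg_left (by linarith [norm_nonneg d]) (abs_nonneg t)
          _ < δ * (‖d‖ + 1) := by
              exact mul_lt_mul_of_pos_right h1 hdpos
          _ = ε := by
              rw [hδ, div_mul_cancel₀]
              exact hdpos.ne'
      show r.IsRoot t
      unfold Polynomial.IsRoot
      rw [keyr t]
      exact hvan _ htmem
    have hinf : {t : ℝ | r.IsRoot t}.Infinite :=
      Set.Infinite.mono hsub (Set.Ioo_infinite (by linarith))
    have hr0 : r = 0 := Polynomial.eq_zero_of_infinite_isRoot _ hinf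
    have := keyr 1
    rw [hr0] at this
    simp at this
    rw [show y = x₀ + d by funext i; simp [hd], ← this]
  exact MvPolynomial.funext (fun x => by rw [key x]; simp)


lemma sign_const {E : Set (Fin 2 → ℝ)} (hconv : Convex ℝ E)
    {g : (Fin 2 → ℝ) → ℝ} (hg : Continuous g)
    (hnz : ∀ x ∈ interior E, g x ≠ 0) :
    (∀ x ∈ interior E, 0 < g x) ∨ (∀ x ∈ interior E, g x < 0) := by
  by_contra hcon
  push_neg at hcon
  obtain ⟨⟨x₁, hx₁, hle₁⟩, ⟨x₂, hx₂, hle₂⟩⟩ := hcon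
  have hpc : IsPreconnected (interior E) := hconv.interior.isPreconnected
  have := hpc.intermediate_value hx₁ hx₂ hg.continuousOn
  have h0 : (0:ℝ) ∈ Set.Icc (g x₁) (g x₂) := ⟨hle₁, hle₂⟩
  obtain ⟨x, hx, hgx⟩ := this h0
  exact hnz x hx hgx


lemma tdeg_prod {ι : Type*} (s : Finset ι) (P : ι → MvPolynomial (Fin 2) ℝ) :
    (∀ i ∈ s, P i ≠ 0) →
    (∏ i ∈ s, P i).totalDegree = ∑ i ∈ s, (P i).totalDegree := by
  classical
  induction s using Finset.induction_on with
  | empty => intro _; simp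
  | @insert j s' hj ih =>
    intro h0
    rw [Finset.prod_insert hj, Finset.sum_insert hj,
      tdeg_mul_eq (h0 j (Finset.mem_insert_self j s'))
        (Finset.prod_ne_zero_iff.2 fun i hi => h0 i (Finset.mem_insert_of_mem hi)),
      ih fun i hi => h0 i (Finset.mem_insert_of_mem hi)]

/-- Unisolvence, convex case: on a convex polygon E (positive area) with boundary
covered by η distinct lines each carrying an edge, if k ≥ η and p ∈ P_k vanishes
on ∂E and has vanishing moments against P_{k-η}(E), then p = 0. -/
theorem stmt_4 (k η : ℕ) (hk : η ≤ k)
    (E : Set (Fin 2 → ℝ)) (hconv : Convex ℝ E) (hbd : Bornology.IsBounded E)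
    (hmeas : MeasurableSet E) (hvol : 0 < volume E)
    (L : Fin η → ℝ × ℝ × ℝ)
    (hL0 : ∀ i, ((L i).1, (L i).2.1) ≠ ((0 : ℝ), (0 : ℝ)))
    (hdist : ∀ i j, i ≠ j →
      ¬ ∃ t : ℝ, (L j).1 = t * (L i).1 ∧ (L j).2.1 = t * (L i).2.1 ∧
        (L j).2.2 = t * (L i).2.2)
    (hB : frontier E ⊆
      ⋃ i, {z : Fin 2 → ℝ | (L i).1 * z 0 + (L i).2.1 * z 1 + (L i).2.2 = 0})
    (hedge : ∀ i, ∃ u v : Fin 2 → ℝ, u ≠ v ∧ segment ℝ u v ⊆ frontier E ∧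
      ∀ z ∈ segment ℝ u v, (L i).1 * z 0 + (L i).2.1 * z 1 + (L i).2.2 = 0)
    (p : MvPolynomial (Fin 2) ℝ) (hp : p.totalDegree ≤ k)
    (hvan : ∀ z ∈ frontier E, eval z p = 0)
    (hmom : ∀ q : MvPolynomial (Fin 2) ℝ, q.totalDegree ≤ k - η →
      ∫ x in E, eval x p * eval x q = 0) :
    p = 0 := by
  classical
  by_cases hp0 : p = 0
  · exact hp0
  exfalso
  set ℓ : Fin η → MvPolynomial (Fin 2) ℝ :=
    fun i => lin (L i).1 (L i).2.1 (L i).2.2 with hℓ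
  have hab : ∀ i, (L i).1 ≠ 0 ∨ (L i).2.1 ≠ 0 := by
    intro i
    by_contra hcon
    push_neg at hcon
    exact hL0 i (by rw [hcon.1, hcon.2])
  have hlnz : ∀ i, ℓ i ≠ 0 := fun i => lin_ne_zero (hL0 i)
  have hltd : ∀ i, (ℓ i).totalDegree = 1 := fun i => lin_tdeg (hL0 i)
  -- each line polynomial divides p
  have hdvd : ∀ i, ℓ i ∣ p := by
    intro i
    obtain ⟨u, v, huv, hseg, honl⟩ := hedge i
    exact lin_dvd_seg (hL0 i) huv honl (fun z hz => hvan z (hseg hz))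
  -- the line polynomials are pairwise non-associate
  have hnd : ∀ i j, i ≠ j → ¬ ℓ i ∣ ℓ j := by
    intro i j hij ⟨m, hm⟩
    have hm0 : m ≠ 0 := by
      intro h0; rw [h0, mul_zero] at hm; exact hlnz j hm
    have htd : (ℓ j).totalDegree = (ℓ i).totalDegree + m.totalDegree := by
      rw [hm]; exact tdeg_mul_eq (hlnz i) hm0
    rw [hltd i, hltd j] at htd
    have hmtd : m.totalDegree = 0 := by omega
    have hmC : m = C (coeff 0 m) := eq_C_of_tdeg_zero hmtd
    set t : ℝ := coeff 0 m with ht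
    apply hdist i j hij
    refine ⟨t, ?_, ?_, ?_⟩
    · have := congrArg (coeff (Finsupp.single 0 1)) hm
      rw [lin_coeff0] at this
      rw [this, hmC, mul_comm (ℓ i) (C t), coeff_C_mul, lin_coeff0]
    · have := congrArg (coeff (Finsupp.single 1 1)) hm
      rw [lin_coeff1] at this
      rw [this, hmC, mul_comm (ℓ i) (C t), coeff_C_mul, lin_coeff1]
    · have := congrArg (coeff 0) hm
      rw [lin_coeffC] at this
      rw [this, hmC, mul_comm (ℓ i) (C t), coeff_C_mul, lin_coeffC]
  -- the product divides p
  set Bp : MvPolynomial (Fin 2) ℝ := ∏ i, ℓ i with hBp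
  have hBdvd : Bp ∣ p := by
    apply prod_primes_dvd' Finset.univ ℓ p
    · intro i _
      exact UniqueFactorizationMonoid.irreducible_iff_prime.mp (lin_irred (hL0 i))
    · intro i _ j _ hij
      exact hnd i j hij
    · intro i _
      exact hdvd i
  obtain ⟨q, hq⟩ := hBdvd
  have hq0 : q ≠ 0 := by
    intro h0; rw [h0, mul_zero] at hq; exact hp0 hq
  have hBnz : Bp ≠ 0 := Finset.prod_ne_zero_iff.2 fun i _ => hlnz i
  have hBtd : Bp.totalDegree = η := by
    rw [hBp, tdeg_prod Finset.univ ℓ fun i _ => hlnz i]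
    simp [hltd]
  have hqtd : q.totalDegree ≤ k - η := by
    have := tdeg_mul_eq hBnz hq0
    rw [← hq, hBtd] at this
    omega
  -- the moment integral
  set g : (Fin 2 → ℝ) → ℝ := fun x => eval x Bp * (eval x q)^2 with hg
  have hgeq : ∀ x, eval x p * eval x q = g x := by
    intro x
    rw [hq, eval_mul, hg]
    ring
  have hzero : ∫ x in E, g x = 0 := by
    rw [← hmom q hqtd]
    exact integral_congr_ae (Filter.Eventually.of_forall fun x => (hgeq x).symm)
  have hgc : Continuous g := by
    exact (Bp.continuous_eval).mul ((q.continuous_eval).pow 2)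
  have hint : IntegrableOn g E volume := by
    have hcomp : IsCompact (closure E) := hbd.isCompact_closure
    exact (hgc.continuousOn.integrableOn_compact hcomp).mono_set subset_closure
  -- eval of Bp does not vanish on the interior
  have hBnv : ∀ x ∈ interior E, eval x Bp ≠ 0 := by
    intro x hx
    rw [hBp, map_prod]
    refine Finset.prod_ne_zero_iff.2 fun i _ => ?_
    rw [hℓ]
    obtain ⟨u, v, huv, hseg, honl⟩ := hedge i
    rw [eval_lin]
    exact interior_off_line hconv (hab i) huv hseg honl hx
  -- q vanishes on the interior
  have hqvan : ∀ x ∈ interior E, eval x q = 0 := by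
    have hBc : Continuous fun x => eval x Bp := Bp.continuous_eval
    rcases sign_const hconv hBc hBnv with hpos | hneg
    · have hnn : ∀ x ∈ interior E, 0 ≤ g x := fun x hx =>
        mul_nonneg (le_of_lt (hpos x hx)) (sq_nonneg _)
      have := vanish_of_integral_zero hconv hgc hint hnn hzero
      intro x hx
      have hgx := this x hx
      rw [hg] at hgx
      have := mul_eq_zero.mp hgx
      rcases this with h | h
      · exact absurd h (hBnv x hx)
      · exact by nlinarith [h, sq_nonneg (eval x q)]
    · have hnn : ∀ x ∈ interior E, 0 ≤ -g x := fun x hx =>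
        neg_nonneg.2 (mul_nonpos_of_nonpos_of_nonneg (le_of_lt (hneg x hx)) (sq_nonneg _))
      have hzero' : ∫ x in E, -g x = 0 := by
        rw [integral_neg, hzero, neg_zero]
      have := vanish_of_integral_zero hconv hgc.neg hint.neg hnn hzero'
      intro x hx
      have hgx := this x hx
      have hgx0 : g x = 0 := by rw [Pi.neg_apply] at hgx; linarith
      rw [hg] at hgx0
      rcases mul_eq_zero.mp hgx0 with h | h
      · exact absurd h (hBnv x hx)
      · exact by nlinarith [h, sq_nonneg (eval x q)]
  -- interior is nonempty
  have hfr : volume (frontier E) = 0 := hconv.addHaar_frontier volume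
  have hne : (interior E).Nonempty := by
    by_contra hcon
    rw [Set.not_nonempty_iff_eq_empty] at hcon
    have hEfr : E ⊆ frontier E := by
      intro x hx
      refine ⟨subset_closure hx, ?_⟩
      rw [hcon]
      exact Set.notMem_empty x
    have := measure_mono_null hEfr hfr
    exact absurd this hvol.ne'
  have hq0' : q = 0 := mvpoly_zero_of_vanish_open isOpen_interior hne hqvan
  exact hq0 hq0'
end

section
/- Let V be a finite-dimensional vector space with dual basis (coordinate functionals) δ₁,…,δ_N, let P ⊆ V, and suppose S ≤ N with the first S functionals injective on P via Π defined by the Euclidean least-squares projection. Then the set V^S := {φ ∈ V : δ_r(φ) = δ_r(Πφ) for all r = S+1,…,N} is a linear subspace of V of dimension S, it contains P, and the map φ ↦ (δ₁(φ),…,δ_S(φ)) is an isomorphism from V^S onto ℝ^S. -/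
open Module

/-- The reduced (serendipity) space V^S = {φ : δ_r(φ) = δ_r(Πφ) for r > S} is a
subspace of dimension S containing P, and the first S degrees of freedom are an
isomorphism from V^S onto ℝ^S. -/
theorem stmt_18 (V : Type*) [AddCommGroup V] [Module ℝ V] [FiniteDimensional ℝ V]
    (N S : ℕ) (hSN : S ≤ N) (δ : Fin N → (V →ₗ[ℝ] ℝ))
    (hiso : Function.Bijective fun φ : V => (fun i => δ i φ : Fin N → ℝ))
    (P : Submodule ℝ V)
    (hinj : ∀ q ∈ P, (∀ i : Fin S, δ (Fin.castLE hSN i) q = 0) → q = 0)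
    (Pr : V →ₗ[ℝ] V) (hPrP : ∀ φ : V, Pr φ ∈ P)
    (hproj : ∀ φ : V, ∀ q ∈ P,
      ∑ i : Fin S, δ (Fin.castLE hSN i) (Pr φ - φ) * δ (Fin.castLE hSN i) q = 0) :
    ∃ W : Submodule ℝ V,
      (W : Set V) = {φ : V | ∀ r : Fin N, S ≤ (r : ℕ) → δ r φ = δ r (Pr φ)} ∧
      Module.finrank ℝ W = S ∧ P ≤ W ∧
      Function.Bijective fun φ : W => (fun i => δ (Fin.castLE hSN i) (φ : V) : Fin S → ℝ) := by
  classical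
  have hzero : ∀ (c : Fin S → ℝ), (∑ i, c i * c i) = 0 → ∀ i, c i = 0 := by
    intro c h i
    have := (Finset.sum_eq_zero_iff_of_nonneg
      (fun j _ => mul_self_nonneg (c j))).mp h i (Finset.mem_univ i)
    exact mul_self_eq_zero.mp this
  -- Pr fixes P
  have hPrq : ∀ q ∈ P, Pr q = q := by
    intro q hq
    have hd : Pr q - q ∈ P := P.sub_mem (hPrP q) hq
    have h0 : ∀ i : Fin S, δ (Fin.castLE hSN i) (Pr q - q) = 0 :=
      hzero _ (hproj q (Pr q - q) hd)
    exact sub_eq_zero.mp (hinj _ hd h0)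
  -- the residual map whose kernel is W
  set g : V →ₗ[ℝ] ({r : Fin N // S ≤ (r : ℕ)} → ℝ) :=
    LinearMap.pi (fun r => (δ r.1).comp (LinearMap.id - Pr)) with hg
  have hWmem : ∀ φ : V, φ ∈ LinearMap.ker g ↔
      ∀ r : Fin N, S ≤ (r : ℕ) → δ r φ = δ r (Pr φ) := by
    intro φ
    simp only [LinearMap.mem_ker, hg, funext_iff, Pi.zero_apply, LinearMap.pi_apply,
      LinearMap.comp_apply, LinearMap.sub_apply, LinearMap.id_apply, map_sub]
    constructor
    · intro h r hr
      have := h ⟨r, hr⟩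
      linarith
    · intro h r
      have := h r.1 r.2
      simp [this]
  -- key injectivity: a member of W with vanishing first S dofs is zero
  have hker0 : ∀ φ : V, φ ∈ LinearMap.ker g →
      (∀ i : Fin S, δ (Fin.castLE hSN i) φ = 0) → φ = 0 := by
    intro φ hφ h0
    have h := hproj φ (Pr φ) (hPrP φ)
    have h' : (∑ i : Fin S, δ (Fin.castLE hSN i) (Pr φ) * δ (Fin.castLE hSN i) (Pr φ)) = 0 := by
      have : ∀ i : Fin S, δ (Fin.castLE hSN i) (Pr φ - φ) = δ (Fin.castLE hSN i) (Pr φ) := by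
        intro i; simp [map_sub, h0 i]
      simpa [this] using h
    have hPr0 : Pr φ = 0 := hinj _ (hPrP φ) (hzero _ h')
    have hall : ∀ r : Fin N, δ r φ = 0 := by
      intro r
      by_cases hr : (r : ℕ) < S
      · have hcast : Fin.castLE hSN ⟨(r : ℕ), hr⟩ = r := rfl
        have := h0 ⟨(r : ℕ), hr⟩
        rwa [hcast] at this
      · have hr' : S ≤ (r : ℕ) := le_of_not_gt hr
        have := (hWmem φ).mp hφ r hr'
        rw [this, hPr0, map_zero]
    have : (fun i => δ i φ) = (fun i => δ i (0 : V)) := by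
      funext i; simp [hall i]
    exact hiso.1 this
  -- the coordinate map on W
  set F : LinearMap.ker g →ₗ[ℝ] (Fin S → ℝ) :=
    LinearMap.pi (fun i => (δ (Fin.castLE hSN i)).comp (LinearMap.ker g).subtype) with hF
  have hinjF : Function.Injective F := by
    rw [← LinearMap.ker_eq_bot]
    refine (Submodule.eq_bot_iff _).mpr ?_
    rintro ⟨φ, hφ⟩ h
    have h0 : ∀ i : Fin S, δ (Fin.castLE hSN i) φ = 0 := by
      intro i
      have := congrFun (LinearMap.mem_ker.mp h) i
      simpa [hF] using this
    exact Subtype.ext (hker0 φ hφ h0)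
  -- dimensions
  have hdimV : finrank ℝ V = N := by
    have e := LinearEquiv.ofBijective (LinearMap.pi δ) hiso
    simpa using e.finrank_eq
  have h1 : Fintype.card {r : Fin N // (r : ℕ) < S} = S := by
    refine Fintype.card_congr ⟨fun r => ⟨r.1, r.2⟩, fun i => ⟨Fin.castLE hSN i, i.2⟩,
      fun r => rfl, fun i => rfl⟩ |>.trans (Fintype.card_fin S)
  have hcard : Fintype.card {r : Fin N // S ≤ (r : ℕ)} = N - S := by
    have h2 := Fintype.card_subtype_compl (fun r : Fin N => (r : ℕ) < S)
    rw [Fintype.card_fin, h1] at h2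
    calc Fintype.card {r : Fin N // S ≤ (r : ℕ)}
        = Fintype.card {r : Fin N // ¬ (r : ℕ) < S} :=
          Fintype.card_congr (Equiv.subtypeEquivRight (fun r => by simp [not_lt]))
      _ = N - S := h2
  have hrange : finrank ℝ (LinearMap.range g) ≤ N - S := by
    refine le_trans (Submodule.finrank_le _) ?_
    rw [Module.finrank_pi, hcard]
  have hrn := LinearMap.finrank_range_add_finrank_ker g
  rw [hdimV] at hrn
  have hge : S ≤ finrank ℝ (LinearMap.ker g) := by omega
  have hle : finrank ℝ (LinearMap.ker g) ≤ S := by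
    have := LinearMap.finrank_le_finrank_of_injective hinjF
    simpa using this
  have hdimW : finrank ℝ (LinearMap.ker g) = S := le_antisymm hle hge
  have hsurjF : Function.Surjective F := by
    have heq : finrank ℝ (LinearMap.ker g) = finrank ℝ (Fin S → ℝ) := by simp [hdimW]
    exact (LinearMap.injective_iff_surjective_of_finrank_eq_finrank heq).mp hinjF
  refine ⟨LinearMap.ker g, ?_, hdimW, ?_, ?_⟩
  · ext φ
    simpa using hWmem φ
  · intro q hq
    exact (hWmem q).mpr (fun r _ => by rw [hPrq q hq])
  · exact ⟨hinjF, hsurjF⟩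
end

section
/- With notation as above, the unisolvence of the reduced degrees of freedom holds: if φ ∈ V^S and δ₁(φ) = … = δ_S(φ) = 0, then φ = 0. -/
/-- Unisolvence of the reduced degrees of freedom: if φ belongs to the
serendipity space V^S and δ₁(φ) = … = δ_S(φ) = 0, then φ = 0. -/
theorem stmt_19 (V : Type*) [AddCommGroup V] [Module ℝ V] [FiniteDimensional ℝ V]
    (N S : ℕ) (hSN : S ≤ N) (δ : Fin N → (V →ₗ[ℝ] ℝ))
    (hiso : Function.Bijective fun φ : V => (fun i => δ i φ : Fin N → ℝ))
    (P : Submodule ℝ V)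
    (hinj : ∀ q ∈ P, (∀ i : Fin S, δ (Fin.castLE hSN i) q = 0) → q = 0)
    (Pr : V →ₗ[ℝ] V) (hPrP : ∀ φ : V, Pr φ ∈ P)
    (hproj : ∀ φ : V, ∀ q ∈ P,
      ∑ i : Fin S, δ (Fin.castLE hSN i) (Pr φ - φ) * δ (Fin.castLE hSN i) q = 0)
    (φ : V)
    (hφ : ∀ r : Fin N, S ≤ (r : ℕ) → δ r φ = δ r (Pr φ))
    (hzero : ∀ i : Fin S, δ (Fin.castLE hSN i) φ = 0) :
    φ = 0 := by
  have hsum := hproj φ (Pr φ) (hPrP φ)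
  have hsq : ∑ i : Fin S, (δ (Fin.castLE hSN i) (Pr φ)) ^ 2 = 0 := by
    rw [← hsum]
    apply Finset.sum_congr rfl
    intro i _
    rw [map_sub, hzero i]
    ring
  have hzeroPr : ∀ i : Fin S, δ (Fin.castLE hSN i) (Pr φ) = 0 := by
    intro i
    have := Finset.sum_eq_zero_iff_of_nonneg
      (fun j _ => sq_nonneg (δ (Fin.castLE hSN j) (Pr φ))) |>.mp hsq i (Finset.mem_univ i)
    exact pow_eq_zero_iff (n := 2) (by norm_num) |>.mp this
  have hPr0 : Pr φ = 0 := hinj _ (hPrP φ) hzeroPr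
  apply hiso.injective (a₂ := 0)
  funext r
  simp only [map_zero]
  rcases lt_or_ge (r : ℕ) S with h | h
  · have := hzero ⟨r, h⟩
    simpa [Fin.castLE] using this
  · rw [hφ r h, hPr0, map_zero]
end
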